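/- Let (f_n) be the integer sequence defined by f_0 = 0, f_1 = 1 and f_n = Σ_{i=1}^{n−1} (2^i C_i − f_i) f_{n−i} for n ≥ 2, where C_i = (1/i)·binomial(2i−2, i−1). Then for every real x with 0 ≤ x < 1/8, Σ_{n≥1} f_n x^n = (−1 − √(1 − 8x) + √(2 + 2√(1 − 8x) + 8x)) / 4. -/

import Mathlib

def catalanC (n : ℕ) : ℕ := (2 * n - 2).choose (n - 1) / n

lemma catalanC_succ (n : ℕ) : catalanC (n + 1) = catalan n := by
  have h := succ_mul_catalan_eq_centralBinom n
  rw [Nat.centralBinom_eq_two_mul_choose] at h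
  unfold catalanC
  have h2 : 2 * (n + 1) - 2 = 2 * n := by omega
  rw [h2, Nat.add_sub_cancel]
  exact Nat.div_eq_of_eq_mul_left n.succ_pos (by rw [← h, Nat.mul_comm])

lemma centralBinom_le_four_pow (n : ℕ) : Nat.centralBinom n ≤ 4 ^ n := by
  induction n with
  | zero => simp [Nat.centralBinom_zero]
  | succ n ih =>
    have h := Nat.succ_mul_centralBinom_succ n
    have h2 : (n + 1) * Nat.centralBinom (n + 1) ≤ (n + 1) * 4 ^ (n + 1) := by
      rw [h, pow_succ]
      calc 2 * (2 * n + 1) * Nat.centralBinom n ≤ (n + 1) * 4 * 4 ^ n := by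
            apply Nat.mul_le_mul (by omega) ih
        _ = (n + 1) * (4 ^ n * 4) := by ring
    exact Nat.le_of_mul_le_mul_left h2 n.succ_pos

lemma catalan_le_four_pow (n : ℕ) : catalan n ≤ 4 ^ n :=
  calc catalan n ≤ (n + 1) * catalan n := Nat.le_mul_of_pos_left _ n.succ_pos
    _ = Nat.centralBinom n := succ_mul_catalan_eq_centralBinom n
    _ ≤ 4 ^ n := centralBinom_le_four_pow n

lemma catalanC_le (n : ℕ) : 2 ^ n * catalanC n ≤ 8 ^ n := by
  cases n with
  | zero => simp [catalanC]
  | succ n =>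
    rw [catalanC_succ]
    calc 2 ^ (n + 1) * catalan n ≤ 2 ^ (n + 1) * 4 ^ n :=
          Nat.mul_le_mul_left _ (catalan_le_four_pow n)
      _ ≤ 8 ^ (n + 1) := by
          rw [pow_succ, pow_succ]
          calc 2 ^ n * 2 * 4 ^ n = (2 * 4) ^ n * 2 := by rw [mul_pow]; ring
            _ ≤ 8 ^ n * 8 := by
                apply Nat.mul_le_mul _ (by norm_num)
                exact Nat.pow_le_pow_left (by norm_num) n

lemma A_conv (n : ℕ) (hn : 2 ≤ n) :
    2 ^ n * catalanC n
      = ∑ i ∈ Finset.Icc 1 (n - 1), 2 ^ i * catalanC i * (2 ^ (n - i) * catalanC (n - i)) := by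
  obtain ⟨m, rfl⟩ : ∃ m, n = m + 2 := ⟨n - 2, by omega⟩
  have hred : m + 2 - 1 = m + 1 := by omega
  rw [hred, ← Finset.Ico_add_one_right_eq_Icc, Finset.sum_Ico_eq_sum_range]
  have hred2 : m + 1 + 1 - 1 = m + 1 := by omega
  rw [hred2]
  have hL : catalanC (m + 2) = catalan (m + 1) := catalanC_succ (m + 1)
  rw [hL, catalan_succ, Fin.sum_univ_eq_sum_range (fun j => catalan j * catalan (m - j)), Finset.mul_sum]
  apply Finset.sum_congr rfl
  intro i hi
  rw [Finset.mem_range] at hi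
  have h1 : 1 + i = i + 1 := by omega
  rw [h1]
  have h2 : m + 2 - (i + 1) = (m - i) + 1 := by omega
  rw [h2, catalanC_succ, catalanC_succ]
  have h3 : 2 ^ (m + 2) = 2 ^ (i + 1) * 2 ^ (m - i + 1) := by
    rw [← pow_add]; congr 1; omega
  rw [h3]; ring

lemma summable_aux {p : ℕ → ℝ} {x : ℝ} (hx0 : 0 ≤ x) (hx : x < 1 / 8)
    (hp0 : ∀ n, 0 ≤ p n) (hple : ∀ n, p n ≤ 8 ^ n) :
    Summable fun n => p n * x ^ n := by
  have hgeo : Summable fun n : ℕ => (8 * x) ^ n :=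
    summable_geometric_of_lt_one (by positivity) (by linarith)
  refine Summable.of_nonneg_of_le
    (fun n => mul_nonneg (hp0 n) (pow_nonneg hx0 n)) (fun n => ?_) hgeo
  calc p n * x ^ n ≤ 8 ^ n * x ^ n := by
        apply mul_le_mul_of_nonneg_right (hple n) (pow_nonneg hx0 n)
    _ = (8 * x) ^ n := by rw [mul_pow]

lemma sum_range_eq_sum_Icc {p q : ℕ → ℝ} (hp0 : p 0 = 0) (hq0 : q 0 = 0) (n : ℕ) :
    ∑ k ∈ Finset.range (n + 1), p k * q (n - k)
      = ∑ i ∈ Finset.Icc 1 (n - 1), p i * q (n - i) := by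
  refine (Finset.sum_subset ?_ ?_).symm
  · intro k hk
    rw [Finset.mem_Icc] at hk
    rw [Finset.mem_range]
    omega
  · intro k hk hnk
    rw [Finset.mem_range] at hk
    rw [Finset.mem_Icc] at hnk
    by_cases h0 : k = 0
    · rw [h0, hp0, zero_mul]
    · have : n - k = 0 := by omega
      rw [this, hq0, mul_zero]

lemma conv_eq {p q : ℕ → ℝ} {x : ℝ} (hx0 : 0 ≤ x)
    (hp : ∀ n, 0 ≤ p n) (hq : ∀ n, 0 ≤ q n) (hp0 : p 0 = 0) (hq0 : q 0 = 0)
    (hps : Summable fun n => p n * x ^ n) (hqs : Summable fun n => q n * x ^ n) :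
    (∑' n, p n * x ^ n) * (∑' n, q n * x ^ n)
      = ∑' n, (∑ i ∈ Finset.Icc 1 (n - 1), p i * q (n - i)) * x ^ n := by
  have hpn : Summable fun n => ‖p n * x ^ n‖ := by
    have : (fun n => ‖p n * x ^ n‖) = fun n => p n * x ^ n := by
      funext n
      exact Real.norm_of_nonneg (mul_nonneg (hp n) (pow_nonneg hx0 n))
    rw [this]; exact hps
  have hqn : Summable fun n => ‖q n * x ^ n‖ := by
    have : (fun n => ‖q n * x ^ n‖) = fun n => q n * x ^ n := by
      funext n
      exact Real.norm_of_nonneg (mul_nonneg (hq n) (pow_nonneg hx0 n))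
    rw [this]; exact hqs
  rw [tsum_mul_tsum_eq_tsum_sum_range_of_summable_norm hpn hqn]
  congr 1
  funext n
  rw [← sum_range_eq_sum_Icc hp0 hq0 n, Finset.sum_mul]
  apply Finset.sum_congr rfl
  intro k hk
  rw [Finset.mem_range] at hk
  have : x ^ k * x ^ (n - k) = x ^ n := by
    rw [← pow_add]; congr 1; omega
  calc p k * x ^ k * (q (n - k) * x ^ (n - k))
      = p k * q (n - k) * (x ^ k * x ^ (n - k)) := by ring
    _ = p k * q (n - k) * x ^ n := by rw [this]

noncomputable def AR (n : ℕ) : ℝ := 2 ^ n * (catalanC n : ℝ)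

lemma AR_zero : AR 0 = 0 := by simp [AR, catalanC]

lemma AR_one : AR 1 = 2 := by
  have : catalanC 1 = 1 := by decide
  simp [AR, this]

lemma AR_nonneg (n : ℕ) : 0 ≤ AR n := by
  unfold AR; positivity

lemma AR_le (n : ℕ) : AR n ≤ 8 ^ n := by
  have := catalanC_le n
  unfold AR
  exact_mod_cast this

lemma AR_conv (n : ℕ) (hn : 2 ≤ n) :
    AR n = ∑ i ∈ Finset.Icc 1 (n - 1), AR i * AR (n - i) := by
  unfold AR
  exact_mod_cast A_conv n hn

noncomputable def catG (x : ℝ) : ℝ := ∑' n, AR n * x ^ n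

lemma catG_summable {x : ℝ} (hx0 : 0 ≤ x) (hx : x < 1 / 8) :
    Summable fun n => AR n * x ^ n :=
  summable_aux hx0 hx AR_nonneg AR_le

lemma catG_zero : catG 0 = 0 := by
  unfold catG
  have : (fun n : ℕ => AR n * (0 : ℝ) ^ n) = fun _ => 0 := by
    funext n
    cases n with
    | zero => simp [AR_zero]
    | succ n => simp
  rw [this, tsum_zero]

lemma catG_quad {x : ℝ} (hx0 : 0 ≤ x) (hx : x < 1 / 8) :
    catG x * catG x = catG x - 2 * x := by
  have hs := catG_summable hx0 hx
  have h := conv_eq hx0 AR_nonneg AR_nonneg AR_zero AR_zero hs hs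
  have hcoeff : (fun n => (∑ i ∈ Finset.Icc 1 (n - 1), AR i * AR (n - i)) * x ^ n)
      = Function.update (fun n => AR n * x ^ n) 1 0 := by
    funext n
    match n with
    | 0 => simp [AR_zero, Function.update]
    | 1 => simp [Function.update]
    | (m + 2) =>
      rw [Function.update_of_ne (by omega), ← AR_conv (m + 2) (by omega)]
  have hupd := (hs.hasSum.update 1 (0 : ℝ)).tsum_eq
  unfold catG
  rw [h, hcoeff, hupd, AR_one]
  ring

lemma catG_lt_half {x : ℝ} (hx0 : 0 ≤ x) (hx : x < 1 / 8) : catG x < 1 / 2 := by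
  have hcont : ContinuousOn catG (Set.Icc 0 x) := by
    apply continuousOn_tsum (u := fun n : ℕ => (8 * x) ^ n)
    · intro n
      exact ((continuous_const.mul (continuous_pow n))).continuousOn
    · exact summable_geometric_of_lt_one (by positivity) (by linarith)
    · intro n y hy
      rw [Set.mem_Icc] at hy
      rw [Real.norm_of_nonneg (mul_nonneg (AR_nonneg n) (pow_nonneg hy.1 n)), mul_pow]
      apply mul_le_mul (AR_le n) (pow_le_pow_left₀ hy.1 hy.2 n)
        (pow_nonneg hy.1 n) (by positivity)
  by_contra hcon
  push_neg at hcon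
  have hne : catG x ≠ 1 / 2 := by
    intro he
    have hq := catG_quad hx0 hx
    rw [he] at hq
    norm_num at hq
    linarith
  have hmem : (1 : ℝ) / 2 ∈ Set.Icc (catG 0) (catG x) := by
    rw [catG_zero]
    constructor <;> [norm_num; exact hcon]
  obtain ⟨y, hy, hyv⟩ := intermediate_value_Icc hx0 hcont hmem
  rw [Set.mem_Icc] at hy
  have hq := catG_quad hy.1 (lt_of_le_of_lt hy.2 hx)
  rw [hyv] at hq
  have : y = 1 / 8 := by linarith
  linarith [lt_of_le_of_lt hy.2 hx]

lemma catG_eq {x : ℝ} (hx0 : 0 ≤ x) (hx : x < 1 / 8) :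
    catG x = (1 - Real.sqrt (1 - 8 * x)) / 2 := by
  have hq := catG_quad hx0 hx
  have hlt := catG_lt_half hx0 hx
  have h2 : (1 - 2 * catG x) ^ 2 = 1 - 8 * x := by nlinarith
  have h3 : Real.sqrt (1 - 8 * x) = 1 - 2 * catG x := by
    rw [← h2, Real.sqrt_sq (by linarith)]
  rw [h3]; ring

theorem genfun_F_closed_form (f : ℕ → ℤ) (hf0 : f 0 = 0) (hf1 : f 1 = 1)
    (hf : ∀ n : ℕ, 2 ≤ n →
      f n = ∑ i ∈ Finset.Icc 1 (n - 1),
        ((2 : ℤ) ^ i * catalanC i - f i) * f (n - i))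
    (x : ℝ) (hx0 : 0 ≤ x) (hx : x < 1 / 8) :
    HasSum (fun n : ℕ => (f n : ℝ) * x ^ n)
      ((-1 - Real.sqrt (1 - 8 * x) +
        Real.sqrt (2 + 2 * Real.sqrt (1 - 8 * x) + 8 * x)) / 4) := by
  -- bounds on f
  have hfb : ∀ n, 0 ≤ f n ∧ f n ≤ 2 ^ n * (catalanC n : ℤ) := by
    intro n
    induction n using Nat.strong_induction_on with
    | _ n ih =>
      match n with
      | 0 => simp [hf0]
      | 1 =>
        refine ⟨by simp [hf1], ?_⟩
        have : catalanC 1 = 1 := by decide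
        simp [hf1, this]
      | (m + 2) =>
        rw [hf (m + 2) (by omega), (by omega : m + 2 - 1 = m + 1)]
        have hterm : ∀ i ∈ Finset.Icc 1 (m + 1),
            0 ≤ ((2 : ℤ) ^ i * catalanC i - f i) * f (m + 2 - i) ∧
            ((2 : ℤ) ^ i * catalanC i - f i) * f (m + 2 - i)
              ≤ 2 ^ i * (catalanC i : ℤ) * (2 ^ (m + 2 - i) * (catalanC (m + 2 - i) : ℤ)) := by
          intro i hi
          rw [Finset.mem_Icc] at hi
          have h1 := ih i (by omega)
          have h2 := ih (m + 2 - i) (by omega)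
          constructor
          · exact mul_nonneg (by linarith [h1.2]) h2.1
          · apply mul_le_mul (by linarith [h1.1]) h2.2 h2.1 (by positivity)
        constructor
        · apply Finset.sum_nonneg
          intro i hi
          exact (hterm i hi).1
        · have hle : ∑ i ∈ Finset.Icc 1 (m + 1), ((2 : ℤ) ^ i * catalanC i - f i) * f (m + 2 - i)
              ≤ ∑ i ∈ Finset.Icc 1 (m + 1),
                  2 ^ i * (catalanC i : ℤ) * (2 ^ (m + 2 - i) * (catalanC (m + 2 - i) : ℤ)) := by
            apply Finset.sum_le_sum
            intro i hi
            exact (hterm i hi).2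
          refine le_trans hle ?_
          have hcast : (2 : ℤ) ^ (m + 2) * (catalanC (m + 2) : ℤ)
              = ∑ i ∈ Finset.Icc 1 (m + 2 - 1),
                  2 ^ i * (catalanC i : ℤ) * (2 ^ (m + 2 - i) * (catalanC (m + 2 - i) : ℤ)) := by
            exact_mod_cast A_conv (m + 2) (by omega)
          rw [(by omega : m + 2 - 1 = m + 1)] at hcast
          rw [hcast]
  -- real sequences
  set P : ℕ → ℝ := fun n => (f n : ℝ) with hP
  set B : ℕ → ℝ := fun n => AR n - P n with hB
  have hP_nonneg : ∀ n, 0 ≤ P n := fun n => by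
    have := (hfb n).1
    simp only [hP]
    exact_mod_cast this
  have hP_le_AR : ∀ n, P n ≤ AR n := by
    intro n
    have h := (hfb n).2
    have h2 : ((f n : ℝ)) ≤ 2 ^ n * (catalanC n : ℝ) := by exact_mod_cast h
    simpa [hP, AR] using h2
  have hP_le : ∀ n, P n ≤ 8 ^ n := fun n => le_trans (hP_le_AR n) (AR_le n)
  have hB_nonneg : ∀ n, 0 ≤ B n := fun n => by
    simp only [hB, sub_nonneg]; exact hP_le_AR n
  have hB_le : ∀ n, B n ≤ 8 ^ n := fun n =>
    le_trans (by simp only [hB]; linarith [hP_nonneg n]) (AR_le n)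
  have hP0 : P 0 = 0 := by simp [hP, hf0]
  have hP1 : P 1 = 1 := by simp [hP, hf1]
  have hB0 : B 0 = 0 := by simp [hB, hP0, AR_zero]
  have hPs : Summable fun n => P n * x ^ n := summable_aux hx0 hx hP_nonneg hP_le
  have hBs : Summable fun n => B n * x ^ n := summable_aux hx0 hx hB_nonneg hB_le
  have hAs := catG_summable hx0 hx
  -- the functional equation
  have hconv := conv_eq hx0 hB_nonneg hP_nonneg hB0 hP0 hBs hPs
  set F : ℝ := ∑' n, P n * x ^ n with hF
  have hGBF : ∑' n, B n * x ^ n = catG x - F := by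
    have : (fun n => B n * x ^ n) = fun n => AR n * x ^ n - P n * x ^ n := by
      funext n; simp only [hB]; ring
    rw [this, hAs.tsum_sub hPs]
    rfl
  have hcoeff : (fun n => (∑ i ∈ Finset.Icc 1 (n - 1), B i * P (n - i)) * x ^ n)
      = Function.update (fun n => P n * x ^ n) 1 0 := by
    funext n
    match n with
    | 0 => simp [hP0, Function.update]
    | 1 => simp [Function.update]
    | (m + 2) =>
      rw [Function.update_of_ne (by omega)]
      have hrec := hf (m + 2) (by omega)
      have hrecR : P (m + 2) = ∑ i ∈ Finset.Icc 1 (m + 2 - 1), B i * P (m + 2 - i) := by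
        simp only [hP, hB, AR]
        exact_mod_cast hrec
      rw [← hrecR]
  have hupd := (hPs.hasSum.update 1 (0 : ℝ)).tsum_eq
  have heqn : (catG x - F) * F = F - x := by
    rw [← hGBF, hconv, hcoeff, hupd, hP1, ← hF]
    ring
  -- solve the quadratic
  have hF_nonneg : 0 ≤ F :=
    tsum_nonneg fun n => mul_nonneg (hP_nonneg n) (pow_nonneg hx0 n)
  set s : ℝ := Real.sqrt (1 - 8 * x) with hs
  have hGeq : catG x = (1 - s) / 2 := catG_eq hx0 hx
  rw [hGeq] at heqn
  have hs_nonneg : 0 ≤ s := Real.sqrt_nonneg _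
  have hs_sq : s ^ 2 = 1 - 8 * x := Real.sq_sqrt (by linarith)
  have ht_nonneg : (0 : ℝ) ≤ 4 * F + 1 + s := by linarith
  have ht_sq : (4 * F + 1 + s) ^ 2 = 2 + 2 * s + 8 * x := by
    linear_combination (-16 : ℝ) * heqn + hs_sq
  have hsqrt2 : Real.sqrt (2 + 2 * s + 8 * x) = 4 * F + 1 + s := by
    rw [← ht_sq, Real.sqrt_sq ht_nonneg]
  rw [hsqrt2]
  have hgoal : (-1 - s + (4 * F + 1 + s)) / 4 = F := by ring
  rw [hgoal]
  exact hPs.hasSum
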